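/- The tridiagonal univariate Laguerre production matrix P° (superdiagonal entries 1, diagonal entries 2n+λ, subdiagonal entries n(n-1+λ)) factors as P° = L·U, where L is the lower-bidiagonal matrix with 1 on the diagonal and 1,2,3,... on the subdiagonal, and U is the upper-bidiagonal matrix with 1 on the superdiagonal and λ, λ+1, λ+2, ... on the diagonal. Consequently, P° is totally positive in ℤ[λ] with the coefficientwise order. -/

import Mathlib

/-- Row-finite infinite matrices: each row is a finitely supported function. -/
def RFMat (R : Type*) [Zero R] := ℕ → (ℕ →₀ R)

namespace RFMat

variable {R : Type*} [CommRing R]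

/-- Matrix product of row-finite matrices: `(P*Q)_{ik} = ∑_j P_{ij} Q_{jk}`. -/
noncomputable def mul (P Q : RFMat R) : RFMat R :=
  fun i => (P i).sum fun j a => a • Q j

end RFMat

open Polynomial

/-- The tridiagonal univariate Laguerre production matrix `P°` over `ℤ[λ]`
(`λ = X`): superdiagonal `1`, diagonal `2n+λ`, subdiagonal `n(n-1+λ)`. -/
noncomputable def Pcirc : RFMat (Polynomial ℤ) :=
  fun n => Finsupp.single (n + 1) 1
    + Finsupp.single n (2 * (n : Polynomial ℤ) + X)
    + Finsupp.single (n - 1) ((n : Polynomial ℤ) * ((n : Polynomial ℤ) - 1 + X))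

/-- The lower-bidiagonal matrix `L` with `1` on the diagonal and `1,2,3,…` on
the subdiagonal. -/
noncomputable def Lmat : RFMat (Polynomial ℤ) :=
  fun n => Finsupp.single n 1 + Finsupp.single (n - 1) (n : Polynomial ℤ)

/-- The upper-bidiagonal matrix `U` with `1` on the superdiagonal and
`λ, λ+1, λ+2, …` on the diagonal. -/
noncomputable def Umat : RFMat (Polynomial ℤ) :=
  fun n => Finsupp.single (n + 1) 1 + Finsupp.single n (X + (n : Polynomial ℤ))

section Aux

open Finset

lemma Lmat_apply (n k : ℕ) : Lmat n k
    = (if n = k then 1 else 0) + (if n - 1 = k then (n : Polynomial ℤ) else 0) := by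
  simp [Lmat, Finsupp.single_apply]

lemma Umat_apply (n k : ℕ) : Umat n k
    = (if n + 1 = k then 1 else 0) + (if n = k then X + (n : Polynomial ℤ) else 0) := by
  simp [Umat, Finsupp.single_apply]
  split_ifs <;> simp

lemma Pcirc_apply (n k : ℕ) : Pcirc n k
    = (if n + 1 = k then 1 else 0) + (if n = k then 2 * (n : Polynomial ℤ) + X else 0)
      + (if n - 1 = k then (n : Polynomial ℤ) * ((n : Polynomial ℤ) - 1 + X) else 0) := by
  simp [Pcirc, Finsupp.single_apply]
  split_ifs <;> ring

lemma key (n k : ℕ) : Pcirc n k = Umat n k + (n : Polynomial ℤ) * Umat (n - 1) k := by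
  rcases n with _ | s
  · rw [Pcirc_apply, Umat_apply]
    norm_num
  · rw [Pcirc_apply, Umat_apply, Umat_apply]
    have h1 : s + 1 - 1 = s := rfl
    rw [h1]
    push_cast
    split_ifs <;> ring

/-- Coefficientwise nonnegativity. -/
def PosC (p : Polynomial ℤ) : Prop := ∀ i, 0 ≤ p.coeff i

lemma PosC.zero : PosC 0 := fun i => by simp

lemma PosC.one : PosC 1 := fun i => by
  rw [Polynomial.coeff_one]; split_ifs <;> norm_num

lemma PosC.mul {p q : Polynomial ℤ} (hp : PosC p) (hq : PosC q) : PosC (p * q) := fun i => by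
  rw [Polynomial.coeff_mul]
  exact Finset.sum_nonneg fun x _ => mul_nonneg (hp _) (hq _)

lemma PosC.add {p q : Polynomial ℤ} (hp : PosC p) (hq : PosC q) : PosC (p + q) := fun i => by
  rw [Polynomial.coeff_add]; exact add_nonneg (hp i) (hq i)

lemma PosC.ite {c : Prop} [Decidable c] {p : Polynomial ℤ} (hp : PosC p) :
    PosC (if c then p else 0) := by
  split_ifs
  exacts [hp, PosC.zero]

lemma PosC.prod {α : Type*} {s : Finset α} {g : α → Polynomial ℤ}
    (h : ∀ a ∈ s, PosC (g a)) : PosC (∏ a ∈ s, g a) :=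
  Finset.prod_induction g PosC (fun _ _ => PosC.mul) PosC.one h

lemma PosC_natCast (n : ℕ) : PosC (n : Polynomial ℤ) := fun i => by
  rw [← Polynomial.C_eq_natCast, Polynomial.coeff_C]
  split_ifs <;> positivity

lemma PosC_X : PosC (X : Polynomial ℤ) := fun i => by
  rw [Polynomial.coeff_X]; split_ifs <;> norm_num

lemma PosC_Lmat (n k : ℕ) : PosC (Lmat n k) := by
  rw [Lmat_apply]
  exact PosC.add (PosC.ite PosC.one) (PosC.ite (PosC_natCast n))

lemma PosC_Umat (n k : ℕ) : PosC (Umat n k) := by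
  rw [Umat_apply]
  exact PosC.add (PosC.ite PosC.one) (PosC.ite (PosC.add PosC_X (PosC_natCast n)))

lemma Lmat_supp {n k : ℕ} (h : Lmat n k ≠ 0) : k ≤ n ∧ n ≤ k + 1 := by
  by_contra hc
  apply h
  rw [Lmat_apply]
  rw [if_neg (by omega), if_neg (by omega), add_zero]

lemma Umat_supp {n k : ℕ} (h : Umat n k ≠ 0) : n ≤ k ∧ k ≤ n + 1 := by
  by_contra hc
  apply h
  rw [Umat_apply]
  rw [if_neg (by omega), if_neg (by omega), add_zero]

/-- Minors of a "staircase" matrix with strictly increasing rows and columns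
pick up only the identity permutation. -/
lemma det_staircase {m : ℕ} (E : ℕ → ℕ → Polynomial ℤ) (r c : Fin m → ℕ)
    (hr : StrictMono r) (hc : StrictMono c)
    (hsupp : ∀ n k, E n k ≠ 0 → k ≤ n ∧ n ≤ k + 1) :
    Matrix.det (Matrix.of fun p q : Fin m => E (r p) (c q)) = ∏ p, E (r p) (c p) := by
  rw [Matrix.det_apply']
  rw [Finset.sum_eq_single (1 : Equiv.Perm (Fin m))]
  · simp
  · intro σ _ hσ
    have hz : ∏ p, (Matrix.of fun p q : Fin m => E (r p) (c q)) (σ p) p = 0 := by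
      by_contra hne
      have hfac : ∀ p, E (r (σ p)) (c p) ≠ 0 := by
        intro p h0
        exact hne (Finset.prod_eq_zero (Finset.mem_univ p) h0)
      have hcon : ∀ p, c p ≤ r (σ p) ∧ r (σ p) ≤ c p + 1 :=
        fun p => hsupp _ _ (hfac p)
      have hmono : StrictMono (⇑σ) := by
        intro p p' hpp
        rcases lt_trichotomy (σ p) (σ p') with h | h | h
        · exact h
        · exact absurd (σ.injective h) (ne_of_lt hpp)
        · exfalso
          have h1 : r (σ p') < r (σ p) := hr h
          have h2 := (hcon p).2
          have h3 := (hcon p').1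
          have h4 := hc hpp
          omega
      have : ⇑σ = id :=
        (StrictMono.range_inj hmono strictMono_id).mp
          (by rw [σ.surjective.range_eq, Set.range_id])
      exact hσ (Equiv.ext fun x => congrFun this x)
    rw [hz, mul_zero]
  · simp

/-- Column expansion of the determinant of a product of rectangular matrices. -/
lemma det_expand {m N : ℕ} (A : Fin m → Fin N → Polynomial ℤ)
    (B : Fin N → Fin m → Polynomial ℤ) :
    Matrix.det (Matrix.of fun p q : Fin m => ∑ j, A p j * B j q)
      = ∑ f : Fin m → Fin N,
          (∏ p, B (f p) p) * Matrix.det (Matrix.of fun p q : Fin m => A p (f q)) := by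
  simp only [Matrix.det_apply', Matrix.of_apply, Finset.prod_univ_sum, Fintype.piFinset_univ,
    Finset.mul_sum]
  rw [Finset.sum_comm]
  refine Finset.sum_congr rfl fun f _ => ?_
  refine Finset.sum_congr rfl fun σ _ => ?_
  rw [Finset.prod_mul_distrib]
  ring

lemma part1 : Pcirc = RFMat.mul Lmat Umat := by
  funext n
  show Pcirc n = (Lmat n).sum fun j a => a • Umat j
  rw [show Lmat n = Finsupp.single n 1 + Finsupp.single (n - 1) (n : Polynomial ℤ) from rfl]
  rw [Finsupp.sum_add_index' (h := fun j a => a • Umat j) (fun j => zero_smul _ _) (fun j a b => add_smul a b _)]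
  rw [Finsupp.sum_single_index (h := fun j a => a • Umat j) (zero_smul _ _),
    Finsupp.sum_single_index (h := fun j a => a • Umat j) (zero_smul _ _),
    one_smul]
  ext k
  rw [Finsupp.add_apply, Finsupp.smul_apply, smul_eq_mul, key]

end Aux

/-- `P° = L·U`, and consequently `P°` is totally positive in
`ℤ[λ]` with the coefficientwise order: every minor is a polynomial in `λ` with
nonnegative coefficients. -/
theorem Pcirc_factorization_and_totally_positive :
    Pcirc = RFMat.mul Lmat Umat ∧
    (∀ (m : ℕ) (rr cc : Fin m → ℕ), StrictMono rr → StrictMono cc →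
      ∀ i : ℕ,
        0 ≤ (Matrix.det (Matrix.of fun p q : Fin m => Pcirc (rr p) (cc q))).coeff i) := by
  refine ⟨part1, ?_⟩
  intro m rr cc hrr hcc i
  set N := (Finset.univ.sup rr) + 1 with hNdef
  have hN : ∀ p, rr p < N := fun p => Nat.lt_succ_of_le (Finset.le_sup (Finset.mem_univ p))
  -- single-index sum extraction
  have e1 : ∀ (a : ℕ), a < N → ∀ (g : ℕ → Polynomial ℤ),
      (∑ j : Fin N, if a = (j : ℕ) then g (j : ℕ) else 0) = g a := by
    intro a ha g
    rw [Finset.sum_eq_single (⟨a, ha⟩ : Fin N)]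
    · simp
    · intro b _ hb
      rw [if_neg fun h => hb (Fin.ext h.symm)]
    · simp
  have hentry : (Matrix.of fun p q : Fin m => Pcirc (rr p) (cc q))
      = Matrix.of fun p q : Fin m => ∑ j : Fin N, Lmat (rr p) (j : ℕ) * Umat (j : ℕ) (cc q) := by
    ext p q
    simp only [Matrix.of_apply]
    rw [key]
    have expand : ∀ j : Fin N, Lmat (rr p) (j : ℕ) * Umat (j : ℕ) (cc q)
        = (if rr p = (j : ℕ) then Umat (j : ℕ) (cc q) else 0)
          + (if rr p - 1 = (j : ℕ) then (rr p : Polynomial ℤ) * Umat (j : ℕ) (cc q) else 0) := by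
      intro j
      rw [Lmat_apply, add_mul]
      split_ifs <;> ring
    rw [Finset.sum_congr rfl fun j _ => expand j, Finset.sum_add_distrib,
      e1 _ (hN p) (fun t => Umat t (cc q)),
      e1 _ (Nat.lt_of_le_of_lt (Nat.sub_le _ _) (hN p))
        (fun t => (rr p : Polynomial ℤ) * Umat t (cc q))]
  rw [hentry, det_expand (fun p j => Lmat (rr p) (j : ℕ))
    (fun j q => Umat (j : ℕ) (cc q)), Polynomial.finset_sum_coeff]
  apply Finset.sum_nonneg
  intro f _
  by_cases hz : (∏ p, Umat ((f p : ℕ)) (cc p)) = 0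
  · rw [hz, zero_mul, Polynomial.coeff_zero]
  · have hU : ∀ p, Umat ((f p : ℕ)) (cc p) ≠ 0 := by
      intro p h0
      exact hz (Finset.prod_eq_zero (Finset.mem_univ p) h0)
    have hcon : ∀ p, (f p : ℕ) ≤ cc p ∧ cc p ≤ (f p : ℕ) + 1 := fun p => Umat_supp (hU p)
    by_cases hinj : Function.Injective f
    · have hfmono : StrictMono fun p => (f p : ℕ) := by
        intro p p' hpp
        have h1 := (hcon p).1
        have h2 := (hcon p').2
        have h3 := hcc hpp
        have h4 : (f p : ℕ) ≠ (f p' : ℕ) := fun h => (ne_of_lt hpp) (hinj (Fin.ext h))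
        show (f p : ℕ) < (f p' : ℕ)
        omega
      have hdet := det_staircase (fun n k => Lmat n k) rr (fun p => (f p : ℕ)) hrr hfmono
        (fun n k h => Lmat_supp h)
      rw [hdet]
      exact PosC.mul (PosC.prod fun p _ => PosC_Umat _ _) (PosC.prod fun p _ => PosC_Lmat _ _) i
    · obtain ⟨a, b, hab, hne⟩ := Function.not_injective_iff.mp hinj
      have hd : Matrix.det (Matrix.of fun p q : Fin m => Lmat (rr p) ((f q : ℕ))) = 0 := by
        apply Matrix.det_zero_of_column_eq hne
        intro p
        simp [hab]
      rw [hd, mul_zero, Polynomial.coeff_zero]
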